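/- Let m be a positive integer, τ ∈ ℍ, and z ∈ ℂ with −Im τ < Im z < 0; set y := e^{2πiz}. Then Σ_{k∈ℤ} y^{2km} q^{mk²} / (1 − y q^k) = Σ_{k>0, l≥0} y^{2km+l} q^{mk² + kl} − Σ_{k≤0, l<0} y^{2km+l} q^{mk² + kl}, where all three series converge absolutely (k, l range over ℤ subject to the stated inequalities). -/

import Mathlib

open Complex Real

/-- `qp τ c` is `q^c = e^{2πicτ}`. -/
noncomputable def qp (τ : ℂ) (c : ℝ) : ℂ := Complex.exp (2 * Real.pi * Complex.I * c * τ)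

private lemma qp_add' (τ : ℂ) (b c : ℝ) : qp τ (b + c) = qp τ b * qp τ c := by
  rw [qp, qp, qp, ← Complex.exp_add]; congr 1; push_cast; ring

private lemma qp_int_mul' (τ : ℂ) (c : ℝ) (l : ℤ) : qp τ (c * l) = qp τ c ^ l := by
  rw [qp, qp, ← Complex.exp_int_mul]; congr 1; push_cast; ring

private lemma norm_qp' (τ : ℂ) (c : ℝ) : ‖qp τ c‖ = rexp (-(2 * π * c * τ.im)) := by
  rw [qp, Complex.norm_exp]
  congr 1
  simp [Complex.mul_re, Complex.mul_im]

private lemma jt_real' (k : ℤ) (s t : ℝ) :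
    jacobiTheta₂_term k (Complex.I * (s:ℂ)) (Complex.I * (t:ℂ))
      = ((rexp (-(π) * (k:ℝ)^2 * t - 2 * π * k * s) : ℝ) : ℂ) := by
  rw [jacobiTheta₂_term, Complex.ofReal_exp]
  congr 1
  push_cast
  linear_combination (2*(π:ℂ)*k*s + π*k^2*t) * Complex.I_sq

private lemma summable_exp_int_quad' {c d : ℝ} (hc : 0 < c) :
    Summable fun k : ℤ => rexp (-c * (k:ℝ) ^ 2 + d * k) := by
  have hπ := Real.pi_pos
  have h1 : Summable (fun k : ℤ =>
      jacobiTheta₂_term k (Complex.I * ((-d / (2 * π) : ℝ) : ℂ)) (Complex.I * ((c / π : ℝ) : ℂ))) := by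
    refine (summable_jacobiTheta₂_term_iff _ _).mpr ?_
    simp [Complex.mul_im]
    positivity
  rw [← Complex.summable_ofReal]
  have h2 : ∀ k : ℤ, ((rexp (-c * (k:ℝ)^2 + d * k) : ℝ) : ℂ)
      = jacobiTheta₂_term k (Complex.I * ((-d / (2 * π) : ℝ) : ℂ))
          (Complex.I * ((c / π : ℝ) : ℂ)) := by
    intro k
    rw [jt_real']
    norm_cast
    congr 1
    field_simp
    ring
  simpa only [h2] using h1

private lemma summable_if_geo' {x : ℝ} (h0 : 0 ≤ x) (h1 : x < 1) :
    Summable (fun l : ℤ => if 0 ≤ l then x ^ l else 0) := by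
  refine Summable.of_nat_of_neg_add_one ?_ ?_
  · refine (summable_geometric_of_lt_one h0 h1).congr fun n => ?_
    rw [if_pos (Int.natCast_nonneg n), zpow_natCast]
  · refine summable_zero.congr fun n => ?_
    rw [if_neg (by omega)]

private lemma summable_if_geo_neg' {x : ℝ} (h0 : 0 ≤ x) (h1 : x < 1) :
    Summable (fun l : ℤ => if l < 0 then x ^ (-l) else 0) := by
  refine Summable.of_nat_of_neg_add_one ?_ ?_
  · refine summable_zero.congr fun n => ?_
    rw [if_neg (by omega)]
  · refine ((summable_geometric_of_lt_one h0 h1).mul_left x).congr fun n => ?_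
    rw [if_pos (by omega), neg_neg, show (n:ℤ) + 1 = ((n+1 : ℕ) : ℤ) by push_cast; ring,
      zpow_natCast, pow_succ, mul_comm]

private lemma hasSum_geo_int_pos' {a r : ℂ} (h : ‖r‖ < 1) :
    HasSum (fun l : ℤ => if 0 ≤ l then a * r ^ l else 0) (a / (1 - r)) := by
  have h1 : HasSum (fun n : ℕ => if 0 ≤ (n:ℤ) then a * r ^ (n:ℤ) else 0) (a * (1 - r)⁻¹) := by
    have base := (hasSum_geometric_of_norm_lt_one h).mul_left a
    have he : (fun n : ℕ => if 0 ≤ (n:ℤ) then a * r ^ (n:ℤ) else 0)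
        = fun n : ℕ => a * r ^ n :=
      funext fun n => by rw [if_pos (Int.natCast_nonneg n), zpow_natCast]
    rw [he]; exact base
  have h2 : HasSum (fun n : ℕ => if 0 ≤ (-((n:ℤ)+1)) then a * r ^ (-((n:ℤ)+1)) else 0) 0 := by
    have he : (fun n : ℕ => if 0 ≤ (-((n:ℤ)+1)) then a * r ^ (-((n:ℤ)+1)) else 0)
        = fun _ : ℕ => (0:ℂ) := funext fun n => by rw [if_neg (by omega)]
    rw [he]; exact hasSum_zero
  have hs := HasSum.of_nat_of_neg_add_one
    (f := fun l : ℤ => if 0 ≤ l then a * r ^ l else 0) h1 h2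
  rw [add_zero] at hs
  rwa [div_eq_mul_inv]

private lemma hasSum_geo_int_neg' {a r : ℂ} (hr0 : r ≠ 0) (h : 1 < ‖r‖) :
    HasSum (fun l : ℤ => if l < 0 then a * r ^ l else 0) (-(a / (1 - r))) := by
  have hinv : ‖r⁻¹‖ < 1 := by
    rw [norm_inv]; exact inv_lt_one_of_one_lt₀ h
  have h1 : HasSum (fun n : ℕ => if (n:ℤ) < 0 then a * r ^ (n:ℤ) else 0) 0 := by
    have he : (fun n : ℕ => if (n:ℤ) < 0 then a * r ^ (n:ℤ) else 0) = fun _ : ℕ => (0:ℂ) :=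
      funext fun n => by rw [if_neg (by omega)]
    rw [he]; exact hasSum_zero
  have h2 : HasSum (fun n : ℕ => if (-((n:ℤ)+1)) < 0 then a * r ^ (-((n:ℤ)+1)) else 0)
      (a * r⁻¹ * (1 - r⁻¹)⁻¹) := by
    have base := (hasSum_geometric_of_norm_lt_one hinv).mul_left (a * r⁻¹)
    have he : (fun n : ℕ => if (-((n:ℤ)+1)) < 0 then a * r ^ (-((n:ℤ)+1)) else 0)
        = fun n : ℕ => a * r⁻¹ * r⁻¹ ^ n := funext fun n => by
      rw [if_pos (by omega), zpow_neg, show ((n:ℤ)+1) = ((n+1 : ℕ) : ℤ) by push_cast; ring,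
        zpow_natCast, ← inv_pow, pow_succ, mul_comm (r⁻¹ ^ n), ← mul_assoc]
    rw [he]; exact base
  have hval : (0:ℂ) + a * r⁻¹ * (1 - r⁻¹)⁻¹ = -(a / (1 - r)) := by
    have e : (1 - r⁻¹) * r = r - 1 := by
      rw [sub_mul, one_mul, inv_mul_cancel₀ hr0]
    rw [zero_add, mul_assoc, ← mul_inv_rev, e, show r - 1 = -(1 - r) by ring, inv_neg,
      mul_neg, div_eq_mul_inv]
  have hs := HasSum.of_nat_of_neg_add_one
    (f := fun l : ℤ => if l < 0 then a * r ^ l else 0) h1 h2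
  rwa [hval] at hs

/-- Geometric expansion of `f₁`: for `-Im τ < Im z < 0`,
`Σ_{k∈ℤ} y^{2km} q^{mk²}/(1 - y q^k) = Σ_{k>0,l≥0} y^{2km+l} q^{mk²+kl}
  - Σ_{k≤0,l<0} y^{2km+l} q^{mk²+kl}`. -/
theorem f1_cone_expansion_lower (m : ℕ) (hm : 0 < m) (τ z : ℂ) (hτ : 0 < τ.im)
    (hz0 : -τ.im < z.im) (hz1 : z.im < 0)
    (y : ℂ) (hy : y = Complex.exp (2 * Real.pi * Complex.I * z)) :
    Summable (fun k : ℤ =>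
      ‖y ^ (2 * k * (m : ℤ)) * qp τ ((m : ℝ) * (k : ℝ) ^ 2) / (1 - y * qp τ (k : ℝ))‖) ∧
    Summable (fun n : ℤ × ℤ => if 0 < n.1 ∧ 0 ≤ n.2 then
      ‖y ^ (2 * n.1 * (m : ℤ) + n.2) * qp τ ((m : ℝ) * (n.1 : ℝ) ^ 2 + (n.1 : ℝ) * (n.2 : ℝ))‖
      else 0) ∧
    Summable (fun n : ℤ × ℤ => if n.1 ≤ 0 ∧ n.2 < 0 then
      ‖y ^ (2 * n.1 * (m : ℤ) + n.2) * qp τ ((m : ℝ) * (n.1 : ℝ) ^ 2 + (n.1 : ℝ) * (n.2 : ℝ))‖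
      else 0) ∧
    (∑' k : ℤ, y ^ (2 * k * (m : ℤ)) * qp τ ((m : ℝ) * (k : ℝ) ^ 2) / (1 - y * qp τ (k : ℝ))) =
      (∑' n : ℤ × ℤ, if 0 < n.1 ∧ 0 ≤ n.2 then
        y ^ (2 * n.1 * (m : ℤ) + n.2) * qp τ ((m : ℝ) * (n.1 : ℝ) ^ 2 + (n.1 : ℝ) * (n.2 : ℝ))
        else 0) -
      (∑' n : ℤ × ℤ, if n.1 ≤ 0 ∧ n.2 < 0 then
        y ^ (2 * n.1 * (m : ℤ) + n.2) * qp τ ((m : ℝ) * (n.1 : ℝ) ^ 2 + (n.1 : ℝ) * (n.2 : ℝ))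
        else 0) := by
  have hπ := Real.pi_pos
  have hm' : (0:ℝ) < (m:ℝ) := by exact_mod_cast hm
  have hyne : y ≠ 0 := by rw [hy]; exact Complex.exp_ne_zero _
  have hny : ‖y‖ = rexp (-(2 * π * z.im)) := by
    rw [hy, Complex.norm_exp]
    congr 1
    simp [Complex.mul_re, Complex.mul_im]
  -- expansion of a term into a k * r k ^ l
  have hterm : ∀ n : ℤ × ℤ,
      y ^ (2 * n.1 * (m:ℤ) + n.2) * qp τ ((m:ℝ) * (n.1:ℝ)^2 + (n.1:ℝ) * (n.2:ℝ))
      = (y ^ (2 * n.1 * (m:ℤ)) * qp τ ((m:ℝ) * (n.1:ℝ)^2)) * (y * qp τ (n.1:ℝ)) ^ n.2 := by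
    rintro ⟨k, l⟩
    show y ^ (2 * k * (m:ℤ) + l) * qp τ ((m:ℝ) * (k:ℝ)^2 + (k:ℝ) * (l:ℝ))
      = (y ^ (2 * k * (m:ℤ)) * qp τ ((m:ℝ) * (k:ℝ)^2)) * (y * qp τ (k:ℝ)) ^ l
    rw [zpow_add₀ hyne, qp_add', qp_int_mul', mul_zpow]
    ring
  -- norms
  have hnr : ∀ k : ℤ, ‖y * qp τ (k:ℝ)‖ = rexp (-(2*π) * (z.im + k * τ.im)) := by
    intro k
    rw [norm_mul, hny, norm_qp', ← Real.exp_add]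
    congr 1; ring
  have hnA : ∀ k : ℤ, ‖y ^ (2 * k * (m:ℤ)) * qp τ ((m:ℝ) * (k:ℝ)^2)‖
      = rexp (-(2*π*(m:ℝ)*τ.im) * (k:ℝ)^2 + (-(4*π*(m:ℝ)*z.im)) * k) := by
    intro k
    rw [norm_mul, norm_zpow, hny, norm_qp', ← Real.rpow_intCast, Real.rpow_def_of_pos
      (Real.exp_pos _), Real.log_exp, ← Real.exp_add]
    congr 1
    push_cast
    ring
  have hA : Summable (fun k : ℤ => ‖y ^ (2 * k * (m:ℤ)) * qp τ ((m:ℝ) * (k:ℝ)^2)‖) := by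
    refine (summable_exp_int_quad' (c := 2*π*(m:ℝ)*τ.im) (d := -(4*π*(m:ℝ)*z.im))
      (by positivity)).congr fun k => ?_
    rw [hnA k]
  -- bounds on ‖r k‖
  have hρpos : (0:ℝ) < rexp (-(2*π) * (z.im + τ.im)) := Real.exp_pos _
  have hρ1 : rexp (-(2*π) * (z.im + τ.im)) < 1 := by
    rw [Real.exp_lt_one_iff]
    nlinarith
  have hσpos : (0:ℝ) < rexp ((2*π) * z.im) := Real.exp_pos _
  have hσ1 : rexp ((2*π) * z.im) < 1 := by
    rw [Real.exp_lt_one_iff]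
    nlinarith
  have hr_le : ∀ k : ℤ, 0 < k → ‖y * qp τ (k:ℝ)‖ ≤ rexp (-(2*π) * (z.im + τ.im)) := by
    intro k hk
    rw [hnr, Real.exp_le_exp]
    have h1 : (1:ℝ) ≤ (k:ℝ) := by exact_mod_cast hk
    have h2 : z.im + τ.im ≤ z.im + (k:ℝ) * τ.im := by nlinarith
    nlinarith [mul_le_mul_of_nonneg_left h2 (by positivity : (0:ℝ) ≤ 2*π)]
  have hr_lt1 : ∀ k : ℤ, 0 < k → ‖y * qp τ (k:ℝ)‖ < 1 :=
    fun k hk => lt_of_le_of_lt (hr_le k hk) hρ1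
  have hrinv_le : ∀ k : ℤ, k ≤ 0 → ‖y * qp τ (k:ℝ)‖⁻¹ ≤ rexp ((2*π) * z.im) := by
    intro k hk
    rw [hnr, ← Real.exp_neg, Real.exp_le_exp]
    have h1 : (k:ℝ) ≤ 0 := by exact_mod_cast hk
    have h2 : z.im + (k:ℝ) * τ.im ≤ z.im := by nlinarith
    nlinarith [mul_le_mul_of_nonneg_left h2 (by positivity : (0:ℝ) ≤ 2*π)]
  have hr_gt1 : ∀ k : ℤ, k ≤ 0 → 1 < ‖y * qp τ (k:ℝ)‖ := by
    intro k hk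
    rw [hnr, Real.one_lt_exp_iff]
    have h1 : (k:ℝ) ≤ 0 := by exact_mod_cast hk
    have hX : z.im + (k:ℝ) * τ.im < 0 := by nlinarith
    nlinarith [mul_pos (by positivity : (0:ℝ) < 2*π) (neg_pos.mpr hX)]
  have hr_ge : ∀ k : ℤ, k ≤ 0 → (rexp ((2*π) * z.im))⁻¹ ≤ ‖y * qp τ (k:ℝ)‖ := by
    intro k hk
    rw [inv_le_comm₀ hσpos (lt_trans one_pos (hr_gt1 k hk))]
    exact hrinv_le k hk
  have hrne : ∀ k : ℤ, y * qp τ (k:ℝ) ≠ 0 :=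
    fun k => mul_ne_zero hyne (Complex.exp_ne_zero _)
  -- conjunct 2
  have S1 : Summable (fun n : ℤ × ℤ => if 0 < n.1 ∧ 0 ≤ n.2 then
      ‖y ^ (2 * n.1 * (m : ℤ) + n.2) * qp τ ((m : ℝ) * (n.1 : ℝ) ^ 2 + (n.1 : ℝ) * (n.2 : ℝ))‖
      else 0) := by
    refine Summable.of_nonneg_of_le (fun n => by positivity) ?_
      (hA.mul_of_nonneg (summable_if_geo' hρpos.le hρ1) (fun k => norm_nonneg _)
        (fun l => by positivity))
    rintro ⟨k, l⟩
    by_cases hc : 0 < k ∧ 0 ≤ l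
    · rw [if_pos hc]
      show _ ≤ _ * (if 0 ≤ l then _ else 0)
      rw [if_pos hc.2, hterm (k, l), norm_mul, norm_zpow]
      obtain ⟨j, rfl⟩ := Int.eq_ofNat_of_zero_le hc.2
      rw [zpow_natCast, zpow_natCast]
      exact mul_le_mul_of_nonneg_left
        (pow_le_pow_left₀ (norm_nonneg _) (hr_le k hc.1) j) (norm_nonneg _)
    · rw [if_neg hc]
      positivity
  -- conjunct 3
  have S2 : Summable (fun n : ℤ × ℤ => if n.1 ≤ 0 ∧ n.2 < 0 then
      ‖y ^ (2 * n.1 * (m : ℤ) + n.2) * qp τ ((m : ℝ) * (n.1 : ℝ) ^ 2 + (n.1 : ℝ) * (n.2 : ℝ))‖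
      else 0) := by
    refine Summable.of_nonneg_of_le (fun n => by positivity) ?_
      (hA.mul_of_nonneg (summable_if_geo_neg' hσpos.le hσ1) (fun k => norm_nonneg _)
        (fun l => by positivity))
    rintro ⟨k, l⟩
    by_cases hc : k ≤ 0 ∧ l < 0
    · rw [if_pos hc]
      show _ ≤ _ * (if l < 0 then _ else 0)
      rw [if_pos hc.2, hterm (k, l), norm_mul, norm_zpow]
      refine mul_le_mul_of_nonneg_left ?_ (norm_nonneg _)
      obtain ⟨j, rfl⟩ : ∃ j : ℕ, l = -((j:ℤ)+1) := ⟨(-l-1).toNat, by omega⟩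
      rw [zpow_neg, show ((j:ℤ)+1) = ((j+1 : ℕ) : ℤ) by push_cast; ring, zpow_natCast,
        ← inv_pow, neg_neg, zpow_natCast]
      exact pow_le_pow_left₀ (by positivity) (hrinv_le k hc.1) (j+1)
    · rw [if_neg hc]
      positivity
  -- conjunct 1
  have hC : ∀ k : ℤ, ‖1 - y * qp τ (k:ℝ)‖⁻¹
      ≤ max (1 - rexp (-(2*π) * (z.im + τ.im)))⁻¹ ((rexp ((2*π) * z.im))⁻¹ - 1)⁻¹ := by
    intro k
    rcases lt_or_ge 0 k with hk | hk
    · refine le_trans ?_ (le_max_left _ _)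
      refine inv_anti₀ (by linarith) ?_
      calc 1 - rexp (-(2*π) * (z.im + τ.im)) ≤ 1 - ‖y * qp τ (k:ℝ)‖ := by
            have := hr_le k hk; linarith
        _ = ‖(1:ℂ)‖ - ‖y * qp τ (k:ℝ)‖ := by rw [norm_one]
        _ ≤ ‖1 - y * qp τ (k:ℝ)‖ := norm_sub_norm_le _ _
    · refine le_trans ?_ (le_max_right _ _)
      have hσinv : (1:ℝ) < (rexp ((2*π) * z.im))⁻¹ := by
        rw [lt_inv_comm₀ one_pos hσpos]; simpa using hσ1
      refine inv_anti₀ (by linarith) ?_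
      calc (rexp ((2*π) * z.im))⁻¹ - 1 ≤ ‖y * qp τ (k:ℝ)‖ - 1 := by
            have := hr_ge k hk; linarith
        _ = ‖y * qp τ (k:ℝ)‖ - ‖(1:ℂ)‖ := by rw [norm_one]
        _ ≤ ‖y * qp τ (k:ℝ) - 1‖ := norm_sub_norm_le _ _
        _ = ‖1 - y * qp τ (k:ℝ)‖ := by rw [norm_sub_rev]
  have S0 : Summable (fun k : ℤ =>
      ‖y ^ (2 * k * (m : ℤ)) * qp τ ((m : ℝ) * (k : ℝ) ^ 2) / (1 - y * qp τ (k : ℝ))‖) := by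
    refine Summable.of_nonneg_of_le (fun k => norm_nonneg _) ?_
      (hA.mul_right (max (1 - rexp (-(2*π) * (z.im + τ.im)))⁻¹
        ((rexp ((2*π) * z.im))⁻¹ - 1)⁻¹))
    intro k
    rw [norm_div, div_eq_mul_inv]
    exact mul_le_mul_of_nonneg_left (hC k) (norm_nonneg _)
  refine ⟨S0, S1, S2, ?_⟩
  -- the identity
  have hf1 : Summable (fun n : ℤ × ℤ => if 0 < n.1 ∧ 0 ≤ n.2 then
      y ^ (2 * n.1 * (m : ℤ) + n.2) * qp τ ((m : ℝ) * (n.1 : ℝ) ^ 2 + (n.1 : ℝ) * (n.2 : ℝ))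
      else 0) := by
    refine Summable.of_norm ?_
    refine S1.congr fun n => ?_
    rw [apply_ite norm, norm_zero]
  have hf2 : Summable (fun n : ℤ × ℤ => if n.1 ≤ 0 ∧ n.2 < 0 then
      y ^ (2 * n.1 * (m : ℤ) + n.2) * qp τ ((m : ℝ) * (n.1 : ℝ) ^ 2 + (n.1 : ℝ) * (n.2 : ℝ))
      else 0) := by
    refine Summable.of_norm ?_
    refine S2.congr fun n => ?_
    rw [apply_ite norm, norm_zero]
  have hFk : ∀ k : ℤ, HasSum (fun l : ℤ =>
      (if 0 < k ∧ 0 ≤ l then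
        y ^ (2 * k * (m : ℤ) + l) * qp τ ((m : ℝ) * (k : ℝ) ^ 2 + (k : ℝ) * (l : ℝ)) else 0)
      - (if k ≤ 0 ∧ l < 0 then
        y ^ (2 * k * (m : ℤ) + l) * qp τ ((m : ℝ) * (k : ℝ) ^ 2 + (k : ℝ) * (l : ℝ)) else 0))
      (y ^ (2 * k * (m : ℤ)) * qp τ ((m : ℝ) * (k : ℝ) ^ 2) / (1 - y * qp τ (k : ℝ))) := by
    intro k
    rcases lt_or_ge 0 k with hk | hk
    · have he : (fun l : ℤ =>
          (if 0 < k ∧ 0 ≤ l then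
            y ^ (2 * k * (m : ℤ) + l) * qp τ ((m : ℝ) * (k : ℝ) ^ 2 + (k : ℝ) * (l : ℝ)) else 0)
          - (if k ≤ 0 ∧ l < 0 then
            y ^ (2 * k * (m : ℤ) + l) * qp τ ((m : ℝ) * (k : ℝ) ^ 2 + (k : ℝ) * (l : ℝ)) else 0))
          = fun l : ℤ => if 0 ≤ l then
            (y ^ (2 * k * (m:ℤ)) * qp τ ((m:ℝ) * (k:ℝ)^2)) * (y * qp τ (k:ℝ)) ^ l else 0 := by
        funext l
        have h2 : ¬(k ≤ 0 ∧ l < 0) := fun hc => absurd hk (not_lt.mpr hc.1)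
        rw [if_neg h2, sub_zero]
        by_cases hl : 0 ≤ l
        · rw [if_pos ⟨hk, hl⟩, if_pos hl, hterm (k, l)]
        · rw [if_neg (fun hc => hl hc.2), if_neg hl]
      rw [he]
      exact hasSum_geo_int_pos' (hr_lt1 k hk)
    · have he : (fun l : ℤ =>
          (if 0 < k ∧ 0 ≤ l then
            y ^ (2 * k * (m : ℤ) + l) * qp τ ((m : ℝ) * (k : ℝ) ^ 2 + (k : ℝ) * (l : ℝ)) else 0)
          - (if k ≤ 0 ∧ l < 0 then
            y ^ (2 * k * (m : ℤ) + l) * qp τ ((m : ℝ) * (k : ℝ) ^ 2 + (k : ℝ) * (l : ℝ)) else 0))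
          = fun l : ℤ => -(if l < 0 then
            (y ^ (2 * k * (m:ℤ)) * qp τ ((m:ℝ) * (k:ℝ)^2)) * (y * qp τ (k:ℝ)) ^ l else 0) := by
        funext l
        have h2 : ¬(0 < k ∧ 0 ≤ l) := fun hc => absurd hk (not_le.mpr hc.1)
        rw [if_neg h2, zero_sub]
        by_cases hl : l < 0
        · rw [if_pos ⟨hk, hl⟩, if_pos hl, hterm (k, l)]
        · rw [if_neg (fun hc => hl hc.2), if_neg hl]
      rw [he]
      have := (hasSum_geo_int_neg' (a := y ^ (2 * k * (m:ℤ)) * qp τ ((m:ℝ) * (k:ℝ)^2))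
        (hrne k) (hr_gt1 k hk)).neg
      rwa [neg_neg] at this
  have hFsum : Summable (fun n : ℤ × ℤ =>
      (if 0 < n.1 ∧ 0 ≤ n.2 then
        y ^ (2 * n.1 * (m : ℤ) + n.2) * qp τ ((m : ℝ) * (n.1 : ℝ) ^ 2 + (n.1 : ℝ) * (n.2 : ℝ))
        else 0)
      - (if n.1 ≤ 0 ∧ n.2 < 0 then
        y ^ (2 * n.1 * (m : ℤ) + n.2) * qp τ ((m : ℝ) * (n.1 : ℝ) ^ 2 + (n.1 : ℝ) * (n.2 : ℝ))
        else 0)) := hf1.sub hf2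
  have key := HasSum.prod_fiberwise hFsum.hasSum (fun k => hFk k)
  rw [key.tsum_eq, Summable.tsum_sub hf1 hf2]
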